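/- Let n ≥ 2 and for 0 < ε < 1 define I(ε) = −(1 − (1+ε)/2^n) log₂((1 − (1+ε)/2^n)/(2^n − 1)) + (2^(n−1) − 1)((1+ε)/2^n) log₂((1+ε)/2^n) + ((1−ε)/2) log₂((1−ε)/2^n). Then lim_{ε → 0⁺} I(ε)/ε² = (2^n − 2)/(2 (2^n − 1) ln 2). -/

import Mathlib

/-- The mutual information `I(S;J)` gained about Simon's parameter by a single query of
Simon's algorithm with a pseudo-pure input state of purity `ε`. -/
noncomputable def simonInfo (n : ℕ) (ε : ℝ) : ℝ :=
  -(1 - (1 + ε) / 2 ^ n) *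
      Real.logb 2 ((1 - (1 + ε) / 2 ^ n) / ((2 : ℝ) ^ n - 1)) +
    ((2 : ℝ) ^ (n - 1) - 1) * ((1 + ε) / 2 ^ n) * Real.logb 2 ((1 + ε) / 2 ^ n) +
    ((1 - ε) / 2) * Real.logb 2 ((1 - ε) / 2 ^ n)

open Filter Real Set

lemma log_one_add_div : Tendsto (fun t : ℝ => Real.log (1 + t) / t) (nhdsWithin 0 {(0:ℝ)}ᶜ) (nhds 1) := by
  have h := hasDerivAt_iff_tendsto_slope.mp (Real.hasDerivAt_log one_ne_zero)
  have hmap : Tendsto (fun t : ℝ => 1 + t) (nhdsWithin 0 {(0:ℝ)}ᶜ) (nhdsWithin 1 {(1:ℝ)}ᶜ) := by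
    apply tendsto_nhdsWithin_of_tendsto_nhds_of_eventually_within
    · have : Tendsto (fun t : ℝ => 1 + t) (nhds 0) (nhds (1 + 0)) :=
        (continuous_const.add continuous_id).tendsto (0:ℝ)
      simpa using this.mono_left nhdsWithin_le_nhds
    · filter_upwards [self_mem_nhdsWithin] with t ht
      simp only [mem_compl_iff, mem_singleton_iff] at ht ⊢
      intro h; apply ht; linarith
  have h2 := h.comp hmap
  rw [inv_one] at h2
  refine h2.congr (fun t => ?_)
  simp [slope, Function.comp, div_eq_inv_mul]

lemma hasDerivAt_psi {t : ℝ} (ht : -1 < t) :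
    HasDerivAt (fun t : ℝ => (1 + t) * Real.log (1 + t) - t) (Real.log (1 + t)) t := by
  have h1 : (0:ℝ) < 1 + t := by linarith
  have hlog : HasDerivAt (fun t : ℝ => Real.log (1 + t)) ((1 + t)⁻¹ * 1) t :=
    (Real.hasDerivAt_log h1.ne').comp t ((hasDerivAt_id t).const_add 1)
  have := (((hasDerivAt_id t).const_add 1).mul hlog).sub (hasDerivAt_id t)
  refine this.congr_deriv ?_
  show 1 * Real.log (1 + t) + (1 + t) * ((1 + t)⁻¹ * 1) - 1 = _
  rw [mul_one, mul_inv_cancel₀ h1.ne']; ring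

lemma F_lim : Tendsto (fun t : ℝ => ((1 + t) * Real.log (1 + t) - t) / t ^ 2)
    (nhdsWithin 0 {(0:ℝ)}ᶜ) (nhds (1/2)) := by
  apply HasDerivAt.lhopital_zero_nhdsNE (f' := fun t => Real.log (1 + t)) (g' := fun t => 2 * t)
  · filter_upwards [eventually_nhdsWithin_of_eventually_nhds
      (eventually_gt_nhds (show (-1:ℝ) < 0 by norm_num))] with t ht
    exact hasDerivAt_psi ht
  · filter_upwards with t
    simpa using (hasDerivAt_pow 2 t)
  · filter_upwards [self_mem_nhdsWithin] with t ht
    simp only [mem_compl_iff, mem_singleton_iff] at ht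
    simpa using ht
  · have : Tendsto (fun t : ℝ => (1 + t) * Real.log (1 + t) - t) (nhds 0) (nhds 0) := by
      have hc : ContinuousAt (fun t : ℝ => (1 + t) * Real.log (1 + t) - t) 0 := by
        apply ContinuousAt.sub _ continuousAt_id
        exact (continuousAt_const.add continuousAt_id).mul
          ((Real.continuousAt_log (by norm_num)).comp (continuousAt_const.add continuousAt_id))
      simpa using hc.tendsto
    exact this.mono_left nhdsWithin_le_nhds
  · have : Tendsto (fun t : ℝ => t ^ 2) (nhds 0) (nhds 0) := by
      simpa using (continuous_pow 2).tendsto (0:ℝ)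
    exact this.mono_left nhdsWithin_le_nhds
  · have := log_one_add_div.div_const 2
    refine (this.congr' ?_).mono_right ?_
    · filter_upwards [self_mem_nhdsWithin] with t ht
      simp only [mem_compl_iff, mem_singleton_iff] at ht
      rw [div_div, mul_comm]
    · exact le_refl _

noncomputable def Fpsi (t : ℝ) : ℝ := ((1 + t) * Real.log (1 + t) - t) / t ^ 2

/-- As `ε → 0⁺`, `I(ε)/ε² → (2^n - 2)/(2 (2^n - 1) ln 2)`: the information gained by one
Simon query with a pseudo-pure state is `(2^n - 2) ε² / (2 (2^n - 1) ln 2) + O(ε³)`. -/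
theorem simon_pps_information_asymptotics (n : ℕ) (hn : 2 ≤ n) :
    Filter.Tendsto (fun ε => simonInfo n ε / ε ^ 2) (nhdsWithin 0 (Set.Ioi 0))
      (nhds (((2 : ℝ) ^ n - 2) / (2 * ((2 : ℝ) ^ n - 1) * Real.log 2))) := by
  have hN4 : (4:ℝ) ≤ (2:ℝ)^n := by
    calc (4:ℝ) = 2^2 := by norm_num
    _ ≤ 2^n := pow_le_pow_right₀ (by norm_num) hn
  set N : ℝ := (2:ℝ)^n with hNdef
  have hN0 : (0:ℝ) < N := by linarith
  have hNm1 : (0:ℝ) < N - 1 := by linarith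
  have hlog2 : Real.log 2 ≠ 0 := ne_of_gt (Real.log_pos (by norm_num))
  have hNhalf : (2:ℝ)^(n-1) = N / 2 := by
    rw [eq_div_iff (two_ne_zero), hNdef, ← pow_succ]
    congr 1
    omega
  -- the comparison function
  set h : ℝ → ℝ := fun ε =>
    ((-1/(N*(N-1))) * Fpsi (-(ε/(N-1))) + ((N-2)/(2*N)) * Fpsi ε + (1/2) * Fpsi (-ε)) / Real.log 2
    with hhdef
  -- limit of h
  have hg2 : Tendsto (fun ε : ℝ => ε) (nhdsWithin 0 (Set.Ioi 0)) (nhdsWithin 0 {(0:ℝ)}ᶜ) :=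
    tendsto_id.mono_left (nhdsWithin_mono 0 (fun x hx => ne_of_gt hx))
  have hg1 : Tendsto (fun ε : ℝ => -(ε/(N-1))) (nhdsWithin 0 (Set.Ioi 0)) (nhdsWithin 0 {(0:ℝ)}ᶜ) := by
    apply tendsto_nhdsWithin_of_tendsto_nhds_of_eventually_within
    · have : Tendsto (fun ε : ℝ => -(ε/(N-1))) (nhds 0) (nhds (-(0/(N-1)))) :=
        ((continuous_id.div_const (N-1)).neg).tendsto 0
      simpa using this.mono_left nhdsWithin_le_nhds
    · filter_upwards [self_mem_nhdsWithin] with t ht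
      have : (0:ℝ) < t := ht
      simp only [mem_compl_iff, mem_singleton_iff]
      intro hc
      have : t / (N-1) = 0 := by linarith [neg_eq_zero.mp hc]
      rw [div_eq_zero_iff] at this
      rcases this with h | h
      · linarith
      · linarith
  have hg3 : Tendsto (fun ε : ℝ => -ε) (nhdsWithin 0 (Set.Ioi 0)) (nhdsWithin 0 {(0:ℝ)}ᶜ) := by
    apply tendsto_nhdsWithin_of_tendsto_nhds_of_eventually_within
    · have : Tendsto (fun ε : ℝ => -ε) (nhds 0) (nhds (-0)) := continuous_neg.tendsto 0
      simpa using this.mono_left nhdsWithin_le_nhds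
    · filter_upwards [self_mem_nhdsWithin] with t ht
      have : (0:ℝ) < t := ht
      simp only [mem_compl_iff, mem_singleton_iff]
      intro hc; linarith [neg_eq_zero.mp hc]
  have hFlim : Tendsto Fpsi (nhdsWithin 0 {(0:ℝ)}ᶜ) (nhds (1/2)) := F_lim
  have hlimh : Tendsto h (nhdsWithin 0 (Set.Ioi 0))
      (nhds (((-1/(N*(N-1))) * (1/2) + ((N-2)/(2*N)) * (1/2) + (1/2) * (1/2)) / Real.log 2)) := by
    apply Tendsto.div_const
    exact (((hFlim.comp hg1).const_mul _).add ((hFlim.comp hg2).const_mul _)).add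
      ((hFlim.comp hg3).const_mul _)
  have hval : ((-1/(N*(N-1))) * (1/2) + ((N-2)/(2*N)) * (1/2) + (1/2) * (1/2)) / Real.log 2
      = (N - 2) / (2 * (N - 1) * Real.log 2) := by
    rw [div_eq_div_iff (by positivity) (by positivity)]
    field_simp
    ring
  rw [hval] at hlimh
  -- eventual equality
  refine hlimh.congr' ?_
  filter_upwards [Ioo_mem_nhdsGT_of_mem (Set.left_mem_Ico.mpr one_pos)] with ε hε
  obtain ⟨hε0, hε1⟩ := hε
  have hεne : ε ≠ 0 := ne_of_gt hε0
  have hp1 : (0:ℝ) < 1 - ε/(N-1) := by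
    have : ε / (N-1) < 1 := by
      rw [div_lt_one hNm1]; linarith
    linarith
  have hp2 : (0:ℝ) < 1 + ε := by linarith
  have hp3 : (0:ℝ) < 1 - ε := by linarith
  have e1 : (1 - (1+ε)/N) / (N - 1) = (1 - ε/(N-1)) / N := by
    field_simp
    ring
  have e2 : Real.log ((1 - ε/(N-1)) / N) = Real.log (1 - ε/(N-1)) - Real.log N :=
    Real.log_div (ne_of_gt hp1) (ne_of_gt hN0)
  have e3 : Real.log ((1+ε)/N) = Real.log (1+ε) - Real.log N :=
    Real.log_div (ne_of_gt hp2) (ne_of_gt hN0)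
  have e4 : Real.log ((1-ε)/N) = Real.log (1-ε) - Real.log N :=
    Real.log_div (ne_of_gt hp3) (ne_of_gt hN0)
  have harg1 : (1:ℝ) + -(ε/(N-1)) = 1 - ε/(N-1) := by ring
  have harg3 : (1:ℝ) + -ε = 1 - ε := by ring
  rw [hhdef]
  simp only [simonInfo, Fpsi, Real.logb, ← hNdef, hNhalf, e1, e2, e3, e4, harg1, harg3]
  set l1 := Real.log (1 - ε/(N-1))
  set l2 := Real.log (1+ε)
  set l3 := Real.log (1-ε)
  set lN := Real.log N
  set L2 := Real.log 2
  have hNne : N ≠ 0 := ne_of_gt hN0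
  have hNm1ne : N - 1 ≠ 0 := ne_of_gt hNm1
  field_simp
  ring
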